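/- arXiv:1302.0564 — 3 statements merged into one kernel-verified Lean document; each statement's English description precedes it below -/
import Mathlib

section
/- For all integers n ≥ k ≥ 1, the partial Bell polynomial satisfies B_{n,k}(0, 2t₂, 3t₃, 4t₄, …) = C(n,k) · k! · B_{n-k,k}(t₂, t₃, t₄, …), where the arguments of the Bell polynomial on the left are x_j = j·t_j for j ≥ 2 and x₁ = 0, and on the right are x_j = t_{j+1} for j ≥ 1. -/
open scoped Classical

noncomputable section

/-- `π` is a set partition of `{0, …, n-1}` (as a finite set of nonempty blocks
covering every element exactly once). -/
def IsSetPartition (n : ℕ) (π : Finset (Finset (Fin n))) : Prop :=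
  (∀ B ∈ π, B.Nonempty) ∧ ∀ i : Fin n, ∃! B, B ∈ π ∧ i ∈ B

/-- The partial Bell polynomial `B_{n,k}(x₁, x₂, …) = ∑_{π} ∏_{B ∈ π} x_{|B|}`,
the sum being over set partitions of an `n`-set into exactly `k` blocks. -/
noncomputable def bellPoly (n k : ℕ) (x : ℕ → MvPolynomial ℕ ℚ) : MvPolynomial ℕ ℚ :=
  ∑ π ∈ Finset.univ.filter
      (fun π : Finset (Finset (Fin n)) => IsSetPartition n π ∧ π.card = k),
    ∏ B ∈ π, x B.card

/-- The indeterminate `t_j`. -/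
noncomputable def t (j : ℕ) : MvPolynomial ℕ ℚ := MvPolynomial.X j

open Finset

namespace BellAux

abbrev MvP : Type := MvPolynomial ℕ ℚ

variable {n k : ℕ}

noncomputable def fiber (f : Fin n → Fin k) (i : Fin k) : Finset (Fin n) :=
  univ.filter fun x => f x = i

lemma mem_fiber {f : Fin n → Fin k} {i : Fin k} {x : Fin n} : x ∈ fiber f i ↔ f x = i := by
  simp [fiber]

noncomputable def Surj (n k : ℕ) : Finset (Fin n → Fin k) := univ.filter Function.Surjective

lemma mem_Surj {f : Fin n → Fin k} : f ∈ Surj n k ↔ Function.Surjective f := by simp [Surj]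

noncomputable def Parts (n k : ℕ) : Finset (Finset (Finset (Fin n))) :=
  univ.filter fun π => IsSetPartition n π ∧ π.card = k

noncomputable def Phi (f : Fin n → Fin k) : Finset (Finset (Fin n)) := univ.image (fiber f)

lemma fiber_injective {f : Fin n → Fin k} (hf : Function.Surjective f) :
    Function.Injective (fiber f) := by
  intro i j h
  obtain ⟨x, hx⟩ := hf i
  have h1 : x ∈ fiber f j := by rw [← h]; exact mem_fiber.2 hx
  rw [← hx, mem_fiber.1 h1]

lemma Phi_mem {f : Fin n → Fin k} (hf : Function.Surjective f) : Phi f ∈ Parts n k := by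
  simp only [Parts, mem_filter, mem_univ, true_and]
  refine ⟨⟨?_, ?_⟩, ?_⟩
  · intro B hB
    obtain ⟨i, -, rfl⟩ := mem_image.1 hB
    obtain ⟨x, hx⟩ := hf i
    exact ⟨x, mem_fiber.2 hx⟩
  · intro x
    refine ⟨fiber f (f x), ⟨mem_image_of_mem _ (mem_univ _), mem_fiber.2 rfl⟩, ?_⟩
    rintro B ⟨hB, hxB⟩
    obtain ⟨i, -, rfl⟩ := mem_image.1 hB
    rw [mem_fiber.1 hxB]
  · rw [Phi, card_image_of_injective _ (fiber_injective hf), card_univ, Fintype.card_fin]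

noncomputable def blk {π : Finset (Finset (Fin n))} (hπ : IsSetPartition n π) (x : Fin n) :
    Finset (Fin n) := (hπ.2 x).choose

lemma blk_mem {π : Finset (Finset (Fin n))} (hπ : IsSetPartition n π) (x : Fin n) :
    blk hπ x ∈ π := (hπ.2 x).choose_spec.1.1

lemma mem_blk {π : Finset (Finset (Fin n))} (hπ : IsSetPartition n π) (x : Fin n) :
    x ∈ blk hπ x := (hπ.2 x).choose_spec.1.2

lemma blk_eq {π : Finset (Finset (Fin n))} (hπ : IsSetPartition n π) {x : Fin n}
    {B : Finset (Fin n)} (hB : B ∈ π) (hx : x ∈ B) : blk hπ x = B :=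
  ((hπ.2 x).choose_spec.2 B ⟨hB, hx⟩).symm

lemma recon_part {π : Finset (Finset (Fin n))} (hπ : IsSetPartition n π)
    (L : {B // B ∈ π} ≃ Fin k) :
    Function.Surjective (fun x => L ⟨blk hπ x, blk_mem hπ x⟩) ∧
      Phi (fun x => L ⟨blk hπ x, blk_mem hπ x⟩) = π := by
  set f : Fin n → Fin k := fun x => L ⟨blk hπ x, blk_mem hπ x⟩ with hf
  have key : ∀ i : Fin k, fiber f i = ((L.symm i : {B // B ∈ π}) : Finset (Fin n)) := by
    intro i
    ext x
    rw [mem_fiber]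
    constructor
    · intro h
      have h2 : (⟨blk hπ x, blk_mem hπ x⟩ : {B // B ∈ π}) = L.symm i := by
        rw [← h]; exact (Equiv.symm_apply_apply L _).symm
      have hb : blk hπ x = ((L.symm i : {B // B ∈ π}) : Finset (Fin n)) :=
        congrArg Subtype.val h2
      rw [← hb]; exact mem_blk hπ x
    · intro hx
      have hb : blk hπ x = ((L.symm i : {B // B ∈ π}) : Finset (Fin n)) :=
        blk_eq hπ (L.symm i).2 hx
      show L ⟨blk hπ x, blk_mem hπ x⟩ = i
      rw [show (⟨blk hπ x, blk_mem hπ x⟩ : {B // B ∈ π}) = L.symm i from Subtype.ext hb,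
        Equiv.apply_symm_apply]
  have hsurj : Function.Surjective f := by
    intro i
    obtain ⟨x, hx⟩ := hπ.1 _ (L.symm i).2
    refine ⟨x, ?_⟩
    have : x ∈ fiber f i := by rw [key i]; exact hx
    exact mem_fiber.1 this
  refine ⟨hsurj, ?_⟩
  ext B
  constructor
  · intro hB
    obtain ⟨i, -, rfl⟩ := mem_image.1 hB
    rw [key]; exact (L.symm i).2
  · intro hB
    have : B = fiber f (L ⟨B, hB⟩) := by rw [key, Equiv.symm_apply_apply]
    rw [this]
    exact mem_image_of_mem _ (mem_univ _)

noncomputable def labelEquiv {π : Finset (Finset (Fin n))} (hπ : IsSetPartition n π)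
    (f : Fin n → Fin k) (hΦ : Phi f = π) : {B // B ∈ π} ≃ Fin k where
  toFun B := f (B.1.min' (hπ.1 B.1 B.2))
  invFun i := ⟨fiber f i, by rw [← hΦ]; exact mem_image_of_mem _ (mem_univ _)⟩
  left_inv := by
    rintro ⟨B, hB⟩
    apply Subtype.ext
    have hB' : B ∈ Phi f := by rw [hΦ]; exact hB
    obtain ⟨i, -, hBi⟩ := mem_image.1 hB'
    show fiber f (f (B.min' (hπ.1 B hB))) = B
    have hmem' : B.min' (hπ.1 B hB) ∈ fiber f i := by rw [hBi]; exact min'_mem _ _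
    rw [mem_fiber.1 hmem']
    exact hBi
  right_inv i := mem_fiber.1 (min'_mem _ _)

noncomputable def countEquiv {π : Finset (Finset (Fin n))} (hπ : IsSetPartition n π) :
    {f : Fin n → Fin k // Function.Surjective f ∧ Phi f = π} ≃ ({B // B ∈ π} ≃ Fin k) where
  toFun fp := labelEquiv hπ fp.1 fp.2.2
  invFun L := ⟨fun x => L ⟨blk hπ x, blk_mem hπ x⟩, (recon_part hπ L).1, (recon_part hπ L).2⟩
  left_inv := by
    rintro ⟨f, hf, hΦ⟩
    apply Subtype.ext
    funext x
    show f ((blk hπ x).min' (hπ.1 (blk hπ x) (blk_mem hπ x))) = f x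
    have hb : blk hπ x ∈ Phi f := by rw [hΦ]; exact blk_mem hπ x
    obtain ⟨i, -, hBi⟩ := mem_image.1 hb
    have h1 : (blk hπ x).min' (hπ.1 (blk hπ x) (blk_mem hπ x)) ∈ fiber f i := by
      rw [hBi]; exact min'_mem _ _
    have h2 : x ∈ fiber f i := by rw [hBi]; exact mem_blk hπ x
    rw [mem_fiber.1 h1, mem_fiber.1 h2]
  right_inv := by
    intro L
    apply Equiv.ext
    rintro ⟨B, hB⟩
    show (fun x => L ⟨blk hπ x, blk_mem hπ x⟩) (B.min' (hπ.1 B hB)) = L ⟨B, hB⟩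
    exact congrArg L (Subtype.ext (blk_eq hπ hB (min'_mem _ _)))

lemma fiber_count {π : Finset (Finset (Fin n))} (hπ : π ∈ Parts n k) :
    ((Surj n k).filter fun f => Phi f = π).card = k.factorial := by
  have hsp : IsSetPartition n π := (mem_filter.1 hπ).2.1
  have hcard : π.card = k := (mem_filter.1 hπ).2.2
  have h1 : ((Surj n k).filter fun f => Phi f = π) =
      univ.filter fun f => Function.Surjective f ∧ Phi f = π := by
    ext f
    simp [Surj, and_assoc]
  have hπk : Fintype.card {B // B ∈ π} = k := by
    rw [Fintype.card_coe]; exact hcard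
  rw [h1, ← Fintype.card_subtype,
    Fintype.card_congr (countEquiv hsp),
    Fintype.card_equiv (Fintype.equivFinOfCardEq hπk), hπk]

lemma image_Phi (n k : ℕ) : (Surj n k).image Phi = Parts n k := by
  ext π
  simp only [mem_image]
  constructor
  · rintro ⟨f, hf, rfl⟩
    exact Phi_mem (mem_Surj.1 hf)
  · intro hπ
    have hsp : IsSetPartition n π := (mem_filter.1 hπ).2.1
    have hcard : π.card = k := (mem_filter.1 hπ).2.2
    have hπk : Fintype.card {B // B ∈ π} = k := by rw [Fintype.card_coe]; exact hcard
    have L := Fintype.equivFinOfCardEq hπk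
    exact ⟨_, mem_Surj.2 (recon_part hsp L).1, (recon_part hsp L).2⟩

lemma factorial_mul_bellPoly (n k : ℕ) (x : ℕ → MvP) :
    (k.factorial : MvP) * bellPoly n k x = ∑ f ∈ Surj n k, ∏ i : Fin k, x (fiber f i).card := by
  have h1 : ∀ f ∈ Surj n k,
      ∏ i : Fin k, x (fiber f i).card = (fun π => ∏ B ∈ π, x B.card) (Phi f) := by
    intro f hf
    show ∏ i : Fin k, x (fiber f i).card = ∏ B ∈ Phi f, x B.card
    simp only [Phi]
    symm
    refine Finset.prod_image ?_
    intro i _ j _ h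
    exact fiber_injective (mem_Surj.1 hf) h
  rw [Finset.sum_congr rfl h1, Finset.sum_comp (fun π : Finset (Finset (Fin n)) => ∏ B ∈ π, x B.card) Phi, image_Phi]
  rw [bellPoly, Finset.mul_sum]
  symm
  refine Finset.sum_congr rfl fun π hπ => ?_
  rw [fiber_count hπ, nsmul_eq_mul]

/-! ### Part 2: the section/injection bijection -/

noncomputable def q (c : ℕ) : MvP := if c = 1 then 0 else t c

lemma pointed_eq (c : ℕ) :
    (if c = 1 then (0 : MvP) else (c : MvP) * t c) = (c : MvP) * q c := by
  by_cases h : c = 1 <;> simp [q, h]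

noncomputable def cpl (m : Fin k → Fin n) : Finset (Fin n) := (univ.image m)ᶜ

lemma mem_cpl {m : Fin k → Fin n} {x : Fin n} : x ∈ cpl m ↔ x ∉ univ.image m := by
  simp [cpl]

lemma cpl_card {m : Fin k → Fin n} (hm : Function.Injective m) : (cpl m).card = n - k := by
  rw [cpl, card_compl, card_image_of_injective _ hm, card_univ, Fintype.card_fin,
    Fintype.card_fin]

noncomputable def embOf (m : Fin k → Fin n) (hm : Function.Injective m) :
    Fin (n - k) → Fin n :=
  fun j => (cpl m).orderEmbOfFin (cpl_card hm) j

lemma embOf_mem (m : Fin k → Fin n) (hm : Function.Injective m) (j : Fin (n - k)) :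
    embOf m hm j ∈ cpl m := orderEmbOfFin_mem _ _ _

lemma embOf_injective (m : Fin k → Fin n) (hm : Function.Injective m) :
    Function.Injective (embOf m hm) :=
  fun a b h => ((cpl m).orderEmbOfFin (cpl_card hm)).injective h

lemma embOf_notMem_image (m : Fin k → Fin n) (hm : Function.Injective m) (j : Fin (n - k)) :
    embOf m hm j ∉ univ.image m := mem_cpl.1 (embOf_mem m hm j)

lemma embOf_surjOn (m : Fin k → Fin n) (hm : Function.Injective m) {x : Fin n}
    (hx : x ∈ cpl m) : ∃ j, embOf m hm j = x := by
  have hx' : x ∈ Set.range ((cpl m).orderEmbOfFin (cpl_card hm)) := by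
    rw [range_orderEmbOfFin]; exact hx
  obtain ⟨j, hj⟩ := hx'
  exact ⟨j, hj⟩

lemma embOf_idx {m : Fin k → Fin n} (hm : Function.Injective m) {x : Fin n} (hx : x ∈ cpl m) :
    embOf m hm (((cpl m).orderIsoOfFin (cpl_card hm)).symm ⟨x, hx⟩) = x := by
  have h := congrArg Subtype.val
    (((cpl m).orderIsoOfFin (cpl_card hm)).apply_symm_apply ⟨x, hx⟩)
  rw [coe_orderIsoOfFin_apply] at h
  exact h

lemma idx_embOf {m : Fin k → Fin n} (hm : Function.Injective m) (j : Fin (n - k))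
    (hmem : embOf m hm j ∈ cpl m) :
    ((cpl m).orderIsoOfFin (cpl_card hm)).symm ⟨embOf m hm j, hmem⟩ = j := by
  have h2 : (⟨embOf m hm j, hmem⟩ : {a // a ∈ cpl m}) =
      (cpl m).orderIsoOfFin (cpl_card hm) j := by
    apply Subtype.ext
    rw [coe_orderIsoOfFin_apply]
    rfl
  rw [h2, OrderIso.symm_apply_apply]

noncomputable def recon (hk : 1 ≤ k) (m : Fin k → Fin n) (h : Fin (n - k) → Fin k) :
    Fin n → Fin k := fun x =>
  if hx : x ∈ univ.image m then (mem_image.1 hx).choose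
  else if hm : Function.Injective m then
    h (((cpl m).orderIsoOfFin (cpl_card hm)).symm ⟨x, mem_cpl.2 hx⟩)
  else ⟨0, hk⟩

lemma recon_section (hk : 1 ≤ k) {m : Fin k → Fin n} (hm : Function.Injective m)
    (h : Fin (n - k) → Fin k) (i : Fin k) : recon hk m h (m i) = i := by
  have hx : m i ∈ univ.image m := mem_image_of_mem _ (mem_univ _)
  simp only [recon]
  rw [dif_pos hx]
  exact hm (mem_image.1 hx).choose_spec.2

lemma recon_emb (hk : 1 ≤ k) {m : Fin k → Fin n} (hm : Function.Injective m)
    (h : Fin (n - k) → Fin k) (j : Fin (n - k)) :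
    recon hk m h (embOf m hm j) = h j := by
  have hx : embOf m hm j ∉ univ.image m := embOf_notMem_image m hm j
  simp only [recon]
  rw [dif_neg hx, dif_pos hm]
  exact congrArg h (idx_embOf hm j _)

lemma sec_inj {f : Fin n → Fin k} {m : Fin k → Fin n} (hs : ∀ i, f (m i) = i) :
    Function.Injective m :=
  fun a b hab => by rw [← hs a, hab, hs b]

lemma recon_eq_self (hk : 1 ≤ k) {f : Fin n → Fin k} {m : Fin k → Fin n}
    (hs : ∀ i, f (m i) = i) :
    recon hk m (fun j => f (embOf m (sec_inj hs) j)) = f := by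
  have hm : Function.Injective m := sec_inj hs
  funext x
  by_cases hx : x ∈ univ.image m
  · simp only [recon]
    rw [dif_pos hx]
    have spec := (mem_image.1 hx).choose_spec.2
    conv_rhs => rw [← spec]
    rw [hs]
  · simp only [recon]
    rw [dif_neg hx, dif_pos hm]
    exact congrArg f (embOf_idx hm (mem_cpl.2 hx))

lemma fiber_eq_insert {f : Fin n → Fin k} {m : Fin k → Fin n} (hm : Function.Injective m)
    (hs : ∀ i, f (m i) = i) (i : Fin k) :
    fiber f i = insert (m i) ((fiber (fun j => f (embOf m hm j)) i).image (embOf m hm)) := by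
  ext x
  simp only [mem_insert, mem_image, mem_fiber]
  constructor
  · intro hfx
    by_cases hx : x ∈ univ.image m
    · obtain ⟨i₀, -, rfl⟩ := mem_image.1 hx
      left
      rw [hs i₀] at hfx
      rw [hfx]
    · right
      obtain ⟨j, hj⟩ := embOf_surjOn m hm (mem_cpl.2 hx)
      refine ⟨j, ?_, hj⟩
      rw [hj]
      exact hfx
  · rintro (rfl | ⟨j, hj, rfl⟩)
    · exact hs i
    · exact hj

lemma fiber_card_succ {f : Fin n → Fin k} {m : Fin k → Fin n} (hm : Function.Injective m)
    (hs : ∀ i, f (m i) = i) (i : Fin k) :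
    (fiber f i).card = (fiber (fun j => f (embOf m hm j)) i).card + 1 := by
  have hnot : m i ∉ (fiber (fun j => f (embOf m hm j)) i).image (embOf m hm) := by
    intro hmem
    obtain ⟨j, -, hj⟩ := mem_image.1 hmem
    exact embOf_notMem_image m hm j (by rw [hj]; exact mem_image_of_mem m (mem_univ i))
  rw [fiber_eq_insert hm hs i, card_insert_of_notMem hnot,
    card_image_of_injective _ (embOf_injective m hm)]

noncomputable def Secs (f : Fin n → Fin k) : Finset (Fin k → Fin n) :=
  univ.filter fun m => ∀ i, f (m i) = i

lemma Secs_card (f : Fin n → Fin k) : (Secs f).card = ∏ i : Fin k, (fiber f i).card := by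
  rw [← Fintype.card_piFinset]
  congr 1
  ext m
  simp [Secs, Fintype.mem_piFinset, fiber]

/-- The central bijection step. -/
lemma pair_sum_eq (n k : ℕ) (hk : 1 ≤ k) :
    ∑ p ∈ (univ ×ˢ univ).filter
        (fun p : (Fin n → Fin k) × (Fin k → Fin n) => ∀ i, p.1 (p.2 i) = i),
      ∏ i : Fin k, q (fiber p.1 i).card
    = ∑ p ∈ (univ ×ˢ univ).filter
        (fun p : (Fin k → Fin n) × (Fin (n - k) → Fin k) => Function.Injective p.1),
      ∏ i : Fin k, q ((fiber p.2 i).card + 1) := by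
  have hmem₁ : ∀ p : (Fin n → Fin k) × (Fin k → Fin n),
      p ∈ (univ ×ˢ univ).filter (fun p => ∀ i, p.1 (p.2 i) = i) ↔ ∀ i, p.1 (p.2 i) = i := by
    intro p; simp
  have hmem₂ : ∀ p : (Fin k → Fin n) × (Fin (n - k) → Fin k),
      p ∈ (univ ×ˢ univ).filter (fun p => Function.Injective p.1) ↔
        Function.Injective p.1 := by
    intro p; simp
  refine Finset.sum_bij'
    (fun p hp => (p.2, fun j => p.1 (embOf p.2 (sec_inj ((hmem₁ p).1 hp)) j)))
    (fun p hp => (recon hk p.1 p.2, p.1)) ?_ ?_ ?_ ?_ ?_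
  · intro p hp
    exact (hmem₂ _).2 (sec_inj ((hmem₁ p).1 hp))
  · intro p hp
    exact (hmem₁ _).2 (recon_section hk ((hmem₂ p).1 hp) p.2)
  · intro p hp
    have hs := (hmem₁ p).1 hp
    exact Prod.ext (recon_eq_self hk hs) rfl
  · intro p hp
    have hm := (hmem₂ p).1 hp
    refine Prod.ext rfl ?_
    funext j
    show recon hk p.1 p.2 (embOf p.1 _ j) = p.2 j
    have : embOf p.1 (sec_inj (recon_section hk hm p.2)) = embOf p.1 hm := rfl
    rw [this]
    exact recon_emb hk hm p.2 j
  · intro p hp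
    have hs := (hmem₁ p).1 hp
    refine Finset.prod_congr rfl fun i _ => ?_
    rw [fiber_card_succ (sec_inj hs) hs i]

lemma Inj_card (n k : ℕ) :
    ((univ : Finset (Fin k → Fin n)).filter Function.Injective).card = n.descFactorial k := by
  rw [← Fintype.card_subtype,
    Fintype.card_congr (Equiv.subtypeInjectiveEquivEmbedding (Fin k) (Fin n)),
    Fintype.card_embedding_eq, Fintype.card_fin, Fintype.card_fin]

lemma sum_q_succ_eq (n' k : ℕ) :
    ∑ h ∈ (univ : Finset (Fin n' → Fin k)), ∏ i : Fin k, q ((fiber h i).card + 1)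
      = ∑ h ∈ Surj n' k, ∏ i : Fin k, t ((fiber h i).card + 1) := by
  have h0 : ∀ h ∈ (univ : Finset (Fin n' → Fin k)), h ∉ Surj n' k →
      (∏ i : Fin k, q ((fiber h i).card + 1)) = 0 := by
    intro h _ hh
    have hns : ¬ Function.Surjective h := fun hsurj => hh (mem_Surj.2 hsurj)
    rw [Function.Surjective] at hns
    push_neg at hns
    obtain ⟨i₀, hi₀⟩ := hns
    refine Finset.prod_eq_zero (mem_univ i₀) ?_
    have he : fiber h i₀ = ∅ := by
      rw [eq_empty_iff_forall_notMem]
      intro x hx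
      exact hi₀ x (mem_fiber.1 hx)
    rw [he, card_empty, q]
    simp
  rw [← Finset.sum_subset (subset_univ (Surj n' k)) h0]
  refine Finset.sum_congr rfl fun h hh => ?_
  refine Finset.prod_congr rfl fun i _ => ?_
  have hne : (fiber h i).Nonempty := by
    obtain ⟨x, hx⟩ := mem_Surj.1 hh i
    exact ⟨x, mem_fiber.2 hx⟩
  have h1 : (fiber h i).card + 1 ≠ 1 := by
    have := card_pos.2 hne
    omega
  rw [q, if_neg h1]

lemma main_identity (n k : ℕ) (hk : 1 ≤ k) :
    ∑ f ∈ Surj n k, ∏ i : Fin k,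
        (if (fiber f i).card = 1 then (0 : MvP)
         else ((fiber f i).card : MvP) * t (fiber f i).card)
      = (n.descFactorial k : MvP) *
        ∑ h ∈ Surj (n - k) k, ∏ i : Fin k, t ((fiber h i).card + 1) := by
  have step1 : ∀ f ∈ Surj n k,
      ∏ i : Fin k, (if (fiber f i).card = 1 then (0 : MvP)
         else ((fiber f i).card : MvP) * t (fiber f i).card)
      = ((Secs f).card : MvP) * ∏ i : Fin k, q (fiber f i).card := by
    intro f _
    calc ∏ i : Fin k, (if (fiber f i).card = 1 then (0 : MvP)
            else ((fiber f i).card : MvP) * t (fiber f i).card)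
        = ∏ i : Fin k, (((fiber f i).card : MvP) * q (fiber f i).card) := by
          exact Finset.prod_congr rfl fun i _ => pointed_eq _
      _ = (∏ i : Fin k, ((fiber f i).card : MvP)) * ∏ i : Fin k, q (fiber f i).card :=
          Finset.prod_mul_distrib
      _ = ((Secs f).card : MvP) * ∏ i : Fin k, q (fiber f i).card := by
          rw [Secs_card, Nat.cast_prod]
  have stepA : ∑ f ∈ Surj n k, ∏ i : Fin k,
        (if (fiber f i).card = 1 then (0 : MvP)
         else ((fiber f i).card : MvP) * t (fiber f i).card)
      = ∑ f ∈ Surj n k, ((Secs f).card : MvP) * ∏ i : Fin k, q (fiber f i).card := by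
    refine Finset.sum_congr rfl ?_
    exact step1
  rw [stepA]
  have step2 : ∑ f ∈ Surj n k, ((Secs f).card : MvP) * ∏ i : Fin k, q (fiber f i).card
      = ∑ f ∈ (univ : Finset (Fin n → Fin k)),
          ((Secs f).card : MvP) * ∏ i : Fin k, q (fiber f i).card := by
    refine Finset.sum_subset (subset_univ _) ?_
    intro f _ hf
    have : Secs f = ∅ := by
      rw [eq_empty_iff_forall_notMem]
      intro m hm
      have hs : ∀ i, f (m i) = i := by
        have := (mem_filter.1 hm).2
        exact this
      exact hf (mem_Surj.2 fun i => ⟨m i, hs i⟩)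
    rw [this, card_empty]
    simp
  rw [step2]
  have step3 : ∑ f ∈ (univ : Finset (Fin n → Fin k)),
      ((Secs f).card : MvP) * ∏ i : Fin k, q (fiber f i).card
      = ∑ p ∈ (univ ×ˢ univ).filter
          (fun p : (Fin n → Fin k) × (Fin k → Fin n) => ∀ i, p.1 (p.2 i) = i),
        ∏ i : Fin k, q (fiber p.1 i).card := by
    rw [Finset.sum_filter, Finset.sum_product]
    refine Finset.sum_congr rfl fun f _ => ?_
    simp only
    rw [← Finset.sum_filter, Finset.sum_const, nsmul_eq_mul]
    rfl
  rw [step3, pair_sum_eq n k hk]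
  rw [Finset.sum_filter, Finset.sum_product]
  have step4 : ∀ m : Fin k → Fin n,
      (∑ h ∈ (univ : Finset (Fin (n - k) → Fin k)),
        if Function.Injective m then ∏ i : Fin k, q ((fiber h i).card + 1) else 0)
      = if Function.Injective m then
          ∑ h ∈ (univ : Finset (Fin (n - k) → Fin k)),
            ∏ i : Fin k, q ((fiber h i).card + 1) else 0 := by
    intro m
    by_cases hm : Function.Injective m <;> simp [hm]
  simp only
  refine Eq.trans (Finset.sum_congr rfl fun m _ => step4 m) ?_
  rw [← Finset.sum_filter, Finset.sum_const, nsmul_eq_mul, Inj_card, sum_q_succ_eq]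

end BellAux

open BellAux in
/-- For `n ≥ k ≥ 1`,
`B_{n,k}(0, 2t₂, 3t₃, …) = C(n,k) ⬝ k! ⬝ B_{n-k,k}(t₂, t₃, t₄, …)`. -/
theorem bell_pointed_eq_choose_mul_bell (n k : ℕ) (hk : 1 ≤ k) (hkn : k ≤ n) :
    bellPoly n k (fun j => if j = 1 then 0 else (j : MvPolynomial ℕ ℚ) * t j)
      = (n.choose k : MvPolynomial ℕ ℚ) * (Nat.factorial k : MvPolynomial ℕ ℚ) *
        bellPoly (n - k) k (fun j => t (j + 1)) := by
  have hfac : ((k.factorial : ℕ) : MvP) ≠ 0 := by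
    exact_mod_cast Nat.cast_ne_zero.2 k.factorial_ne_zero
  apply mul_left_cancel₀ hfac
  have hA := factorial_mul_bellPoly n k
    (fun j => if j = 1 then 0 else (j : MvPolynomial ℕ ℚ) * t j)
  have hB := factorial_mul_bellPoly (n - k) k (fun j => t (j + 1))
  rw [hA, main_identity n k hk]
  have hdesc : (n.descFactorial k : MvP) = (k.factorial : MvP) * (n.choose k : MvP) := by
    rw [← Nat.cast_mul, Nat.descFactorial_eq_factorial_mul_choose]
  rw [hdesc]
  have hB' : ∑ h ∈ Surj (n - k) k, ∏ i : Fin k, t ((fiber h i).card + 1)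
      = (k.factorial : MvP) * bellPoly (n - k) k (fun j => t (j + 1)) := hB.symm
  rw [hB']
  ring
end
end

section
/- A pointed connected simple graph (g, v₀) is a prime structure of the pointed-graph operad 𝒢_c^• (i.e., admits only trivial factorizations under the operad product) if and only if g is nonseparable (2-connected, i.e., has no cutpoint). -/
open scoped Classical

noncomputable section

/-- The operad product of the operad `𝒢_c^•` of pointed connected graphs.
The assembly is encoded by a graph `h` (its connected components are the
blocks, each with the induced connected graph), a choice `pt` of a
distinguished vertex in each component (constant on components), and an
external graph `g'` on the components.  All edges of `h` are kept and the
distinguished vertices of adjacent (in `g'`) components get joined. -/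
def etaP {V : Type} (h : SimpleGraph V) (pt : V → V)
    (g' : SimpleGraph h.ConnectedComponent) : SimpleGraph V :=
  SimpleGraph.fromRel fun u v =>
    h.Adj u v ∨
      (g'.Adj (h.connectedComponentMk u) (h.connectedComponentMk v) ∧ u = pt u ∧ v = pt v)

/-- `(h, pt, g')` is a factorization of the pointed connected graph `(g, v₀)`
in the pointed graph operad. -/
def IsPointedFactorization {V : Type} (g : SimpleGraph V) (v₀ : V)
    (h : SimpleGraph V) (pt : V → V) (g' : SimpleGraph h.ConnectedComponent) : Prop :=
  (∀ v, h.connectedComponentMk (pt v) = h.connectedComponentMk v) ∧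
  (∀ u v, h.connectedComponentMk u = h.connectedComponentMk v → pt u = pt v) ∧
  g'.Connected ∧ pt v₀ = v₀ ∧ etaP h pt g' = g

private lemma reach_closed {V : Type} {G : SimpleGraph V} (P : V → Prop)
    (hP : ∀ a b, G.Adj a b → P a → P b) {a b : V} (h : G.Reachable a b) (ha : P a) : P b := by
  obtain ⟨w⟩ := h
  induction w with
  | nil => exact ha
  | cons hadj p ih => exact ih (hP _ _ hadj ha)

private lemma reach_map {V W : Type} {G : SimpleGraph V} {G' : SimpleGraph W} (f : V → W)
    (hf : ∀ a b, G.Adj a b → f a = f b ∨ G'.Adj (f a) (f b)) {a b : V} (h : G.Reachable a b) :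
    G'.Reachable (f a) (f b) := by
  obtain ⟨w⟩ := h
  induction w with
  | nil => exact SimpleGraph.Reachable.refl _
  | cons hadj p ih =>
      rcases hf _ _ hadj with e | e
      · exact e ▸ ih
      · exact e.reachable.trans ih

/-- A pointed connected graph `(g, v₀)` is a prime structure of the pointed
graph operad (it admits only trivial factorizations, i.e. in any factorization
the assembly either consists of singletons, `h = ⊥`, or of the single block
`U`, `h` connected) if and only if `g` is nonseparable: no vertex is a
cutpoint. -/
theorem pointed_graph_prime_iff_nonseparable {V : Type} [Fintype V]
    (g : SimpleGraph V) (v₀ : V) (hg : g.Connected) (hV : 2 ≤ Fintype.card V) :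
    (∀ (h : SimpleGraph V) (pt : V → V) (g' : SimpleGraph h.ConnectedComponent),
        IsPointedFactorization g v₀ h pt g' → h = ⊥ ∨ h.Connected)
      ↔ ∀ v : V, (SimpleGraph.induce {u : V | u ≠ v} g).Connected := by
  constructor
  · -- prime → nonseparable
    intro hprime v
    by_contra hncon
    set S : Set V := {u : V | u ≠ v} with hS
    set gS := SimpleGraph.induce S g with hgSdef
    have hSne : Nonempty S := by
      obtain ⟨u, hu⟩ := Fintype.exists_ne_of_one_lt_card (by omega) v
      exact ⟨⟨u, hu⟩⟩
    have hpre : ¬ gS.Preconnected := fun hp => hncon ((SimpleGraph.connected_iff _).mpr ⟨hp, hSne⟩)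
    rw [SimpleGraph.Preconnected] at hpre
    push_neg at hpre
    obtain ⟨x, y, hxy⟩ := hpre
    have hxyne : gS.connectedComponentMk x ≠ gS.connectedComponentMk y :=
      fun e => hxy (SimpleGraph.ConnectedComponent.eq.mp e)
    obtain ⟨K, ⟨z₀, hz₀⟩, ⟨z₁, hz₁⟩, hKv₀⟩ :
        ∃ K : gS.ConnectedComponent, (∃ z, gS.connectedComponentMk z = K) ∧
          (∃ z, gS.connectedComponentMk z ≠ K) ∧
          ∀ (h0 : v₀ ≠ v), gS.connectedComponentMk ⟨v₀, h0⟩ ≠ K := by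
      by_cases h0 : v₀ = v
      · exact ⟨gS.connectedComponentMk x, ⟨x, rfl⟩, ⟨y, fun e => hxyne e.symm⟩,
          fun h0' => absurd h0 h0'⟩
      · by_cases hx0 : gS.connectedComponentMk ⟨v₀, h0⟩ = gS.connectedComponentMk x
        · exact ⟨gS.connectedComponentMk y, ⟨y, rfl⟩, ⟨x, hxyne⟩,
            fun _ e => hxyne (hx0.symm.trans e)⟩
        · exact ⟨gS.connectedComponentMk x, ⟨x, rfl⟩, ⟨y, fun e => hxyne e.symm⟩,
            fun _ => hx0⟩
    set C₁ : Set V := {u : V | ∃ hu : u ≠ v, gS.connectedComponentMk ⟨u, hu⟩ = K} with hC₁def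
    set B₀ : Set V := insert v C₁ with hB₀def
    have hvC₁ : v ∉ C₁ := fun hv => hv.1 rfl
    have hvB₀ : v ∈ B₀ := Set.mem_insert _ _
    set h : SimpleGraph V :=
      { Adj := fun p q => g.Adj p q ∧ p ∈ B₀ ∧ q ∈ B₀
        symm := ⟨fun p q ⟨hpq, hp, hq⟩ => ⟨hpq.symm, hq, hp⟩⟩
        loopless := ⟨fun p ⟨hpp, _, _⟩ => g.loopless.irrefl p hpp⟩ } with hhdef
    have hL1 : ∀ p q : V, g.Adj p q → p ∈ C₁ → q ≠ v → q ∈ C₁ := by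
      intro p q hpq hp hq
      obtain ⟨hp', hpK⟩ := hp
      refine ⟨hq, ?_⟩
      have hadj : gS.Adj ⟨p, hp'⟩ ⟨q, hq⟩ := hpq
      exact (SimpleGraph.ConnectedComponent.eq.mpr hadj.symm.reachable).trans hpK
    have hC₁closed : ∀ p q : V, g.Adj p q → p ∈ C₁ → q ∈ C₁ ∨ q = v := by
      intro p q hpq hp
      by_cases hq : q = v
      · exact Or.inr hq
      · exact Or.inl (hL1 p q hpq hp hq)
    have hz₀C : (z₀ : V) ∈ C₁ := ⟨z₀.2, hz₀⟩
    obtain ⟨c, hcC, hvc⟩ : ∃ c ∈ C₁, g.Adj v c := by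
      by_contra hno
      push_neg at hno
      have hclosed : ∀ p q : V, g.Adj p q → p ∈ C₁ → q ∈ C₁ := by
        intro p q hpq hp
        rcases hC₁closed p q hpq hp with h' | rfl
        · exact h'
        · exact absurd hpq.symm (hno p hp)
      have hz₁C : (z₁ : V) ∈ C₁ :=
        reach_closed (fun u => u ∈ C₁) hclosed (hg.preconnected ↑z₀ ↑z₁) hz₀C
      exact hz₁ hz₁C.2
    -- reachability in h within the component K
    have hL2a : ∀ (p q : S), gS.Reachable p q → gS.connectedComponentMk p = K →
        h.Reachable ↑p ↑q := by
      intro p q hre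
      obtain ⟨wk⟩ := hre
      induction wk with
      | nil => exact fun _ => SimpleGraph.Reachable.refl _
      | @cons a m q' hadj wk ih =>
        intro hpK
        have hmK : gS.connectedComponentMk m = K :=
          (SimpleGraph.ConnectedComponent.eq.mpr hadj.symm.reachable).trans hpK
        have hpC : (a : V) ∈ C₁ := ⟨a.2, hpK⟩
        have hmC : (m : V) ∈ C₁ := ⟨m.2, hmK⟩
        have hstep : h.Adj ↑a ↑m :=
          ⟨hadj, Set.mem_insert_of_mem _ hpC, Set.mem_insert_of_mem _ hmC⟩
        exact hstep.reachable.trans (ih hmK)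
    have hB₀reach : ∀ p ∈ B₀, h.Reachable v p := by
      intro p hp
      rcases Set.mem_insert_iff.mp hp with rfl | hpC
      · exact SimpleGraph.Reachable.refl _
      · have h1 : h.Adj v c := ⟨hvc, hvB₀, Set.mem_insert_of_mem _ hcC⟩
        obtain ⟨hc', hcK⟩ := hcC
        obtain ⟨hp', hpK⟩ := hpC
        have h2 : h.Reachable c p :=
          hL2a ⟨c, hc'⟩ ⟨p, hp'⟩
            (SimpleGraph.ConnectedComponent.eq.mp (hcK.trans hpK.symm)) hcK
        exact h1.reachable.trans h2
    have hL3 : ∀ p q : V, h.Reachable p q → p = q ∨ (p ∈ B₀ ∧ q ∈ B₀) := by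
      intro p q hre
      obtain ⟨wk⟩ := hre
      induction wk with
      | nil => exact Or.inl rfl
      | @cons a m q' hadj wk ih =>
        obtain ⟨_, haB, hmB⟩ := hadj
        rcases ih with rfl | ⟨_, hqB⟩
        · exact Or.inr ⟨haB, hmB⟩
        · exact Or.inr ⟨haB, hqB⟩
    set pt : V → V := fun u => if u ∈ B₀ then v else u with hptdef
    have hptB : ∀ u ∈ B₀, pt u = v := fun u hu => if_pos hu
    have hptN : ∀ u, u ∉ B₀ → pt u = u := fun u hu => if_neg hu
    have hpt1 : ∀ u, h.connectedComponentMk (pt u) = h.connectedComponentMk u := by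
      intro u
      by_cases hu : u ∈ B₀
      · rw [hptB u hu]
        exact SimpleGraph.ConnectedComponent.eq.mpr (hB₀reach u hu)
      · rw [hptN u hu]
    have hpt2 : ∀ u w, h.connectedComponentMk u = h.connectedComponentMk w → pt u = pt w := by
      intro u w he
      rcases hL3 u w (SimpleGraph.ConnectedComponent.eq.mp he) with rfl | ⟨hu, hw⟩
      · rfl
      · rw [hptB u hu, hptB w hw]
    set g' : SimpleGraph h.ConnectedComponent :=
      SimpleGraph.fromRel (fun X Y => g.Adj (pt X.out) (pt Y.out)) with hg'def
    have hptc : ∀ u, pt (h.connectedComponentMk u).out = pt u := by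
      intro u
      exact hpt2 _ _ (h.connectedComponentMk u).out_eq
    have hg'adj : ∀ u w : V,
        g'.Adj (h.connectedComponentMk u) (h.connectedComponentMk w) ↔
        (h.connectedComponentMk u ≠ h.connectedComponentMk w ∧ g.Adj (pt u) (pt w)) := by
      intro u w
      rw [hg'def, SimpleGraph.fromRel_adj, hptc u, hptc w]
      constructor
      · rintro ⟨hne, hr | hr⟩
        · exact ⟨hne, hr⟩
        · exact ⟨hne, hr.symm⟩
      · rintro ⟨hne, hr⟩
        exact ⟨hne, Or.inl hr⟩
    have hcross : ∀ a b : V, g.Adj a b → a ∈ B₀ → b ∉ B₀ → a = v := by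
      intro a b hab ha hb
      by_contra hav
      have haC : a ∈ C₁ := (Set.mem_insert_iff.mp ha).resolve_left hav
      rcases hC₁closed a b hab haC with hbC | rfl
      · exact hb (Set.mem_insert_of_mem _ hbC)
      · exact hb hvB₀
    have hcompne : ∀ a b : V, g.Adj a b → ¬ (a ∈ B₀ ∧ b ∈ B₀) →
        h.connectedComponentMk a ≠ h.connectedComponentMk b := by
      intro a b hab hnB he
      rcases hL3 a b (SimpleGraph.ConnectedComponent.eq.mp he) with rfl | hB
      · exact hab.ne rfl
      · exact hnB hB
    have hptadj : ∀ a b : V, g.Adj a b → ¬ (a ∈ B₀ ∧ b ∈ B₀) → g.Adj (pt a) (pt b) := by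
      intro a b hab hnB
      by_cases ha : a ∈ B₀
      · have hb : b ∉ B₀ := fun hb => hnB ⟨ha, hb⟩
        have hav := hcross a b hab ha hb
        rw [hptB a ha, hptN b hb, ← hav]
        exact hab
      · by_cases hb : b ∈ B₀
        · have hbv := hcross b a hab.symm hb ha
          rw [hptN a ha, hptB b hb, ← hbv]
          exact hab
        · rw [hptN a ha, hptN b hb]
          exact hab
    have hg'c : g'.Connected := by
      have hmap : ∀ a b : V, g.Adj a b →
          h.connectedComponentMk a = h.connectedComponentMk b ∨
          g'.Adj (h.connectedComponentMk a) (h.connectedComponentMk b) := by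
        intro a b hab
        by_cases he : h.connectedComponentMk a = h.connectedComponentMk b
        · exact Or.inl he
        · refine Or.inr ((hg'adj a b).mpr ⟨he, ?_⟩)
          have hnB : ¬ (a ∈ B₀ ∧ b ∈ B₀) := by
            rintro ⟨ha, hb⟩
            exact he (SimpleGraph.ConnectedComponent.eq.mpr
              ((hB₀reach a ha).symm.trans (hB₀reach b hb)))
          exact hptadj a b hab hnB
      rw [SimpleGraph.connected_iff]
      refine ⟨?_, ⟨h.connectedComponentMk v⟩⟩
      intro X Y
      refine SimpleGraph.ConnectedComponent.ind₂ (fun a b => ?_) X Y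
      exact reach_map (h.connectedComponentMk) hmap (hg.preconnected a b)
    have heqg : etaP h pt g' = g := by
      ext a b
      simp only [etaP, SimpleGraph.fromRel_adj]
      constructor
      · rintro ⟨hne, (⟨hgadj, -, -⟩ | ⟨hadjk, hpa, hpb⟩) | (⟨hgadj, -, -⟩ | ⟨hadjk, hpb, hpa⟩)⟩
        · exact hgadj
        · have := ((hg'adj a b).mp hadjk).2
          rwa [← hpa, ← hpb] at this
        · exact hgadj.symm
        · have := ((hg'adj b a).mp hadjk).2
          rw [← hpa, ← hpb] at this
          exact this.symm
      · intro hgadj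
        refine ⟨hgadj.ne, Or.inl ?_⟩
        by_cases hB : a ∈ B₀ ∧ b ∈ B₀
        · exact Or.inl ⟨hgadj, hB.1, hB.2⟩
        · refine Or.inr ⟨(hg'adj a b).mpr ⟨hcompne a b hgadj hB, hptadj a b hgadj hB⟩, ?_, ?_⟩
          · by_cases ha : a ∈ B₀
            · have hb : b ∉ B₀ := fun hb => hB ⟨ha, hb⟩
              rw [hptB a ha]
              exact hcross a b hgadj ha hb
            · rw [hptN a ha]
          · by_cases hb : b ∈ B₀
            · have ha : a ∉ B₀ := fun ha => hB ⟨ha, hb⟩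
              rw [hptB b hb]
              exact hcross b a hgadj.symm hb ha
            · rw [hptN b hb]
    have hptv₀ : pt v₀ = v₀ := by
      by_cases h0 : v₀ = v
      · subst h0
        exact hptB v₀ hvB₀
      · refine hptN v₀ ?_
        intro hmem
        rcases Set.mem_insert_iff.mp hmem with h' | hC
        · exact h0 h'
        · obtain ⟨h0', hK⟩ := hC
          exact hKv₀ h0' hK
    rcases hprime h pt g' ⟨hpt1, hpt2, hg'c, hptv₀, heqg⟩ with hbot | hconn
    · have hedge : h.Adj v c := ⟨hvc, hvB₀, Set.mem_insert_of_mem _ hcC⟩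
      rw [hbot] at hedge
      exact hedge
    · have hz₁B : (z₁ : V) ∉ B₀ := by
        intro hmem
        rcases Set.mem_insert_iff.mp hmem with h' | hC
        · exact z₁.2 h'
        · exact hz₁ hC.2
      rcases hL3 v ↑z₁ (hconn.preconnected v ↑z₁) with he | ⟨-, hB⟩
      · exact z₁.2 he.symm
      · exact hz₁B hB
  · -- nonseparable → prime
    intro hns h pt g' hfac
    by_contra hcon
    push_neg at hcon
    obtain ⟨hne, hnc⟩ := hcon
    obtain ⟨hpt1, hpt2, hg'c, hv0, heq⟩ := hfac
    obtain ⟨a, b, hab⟩ : ∃ a b, h.Adj a b := by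
      by_contra hE
      push_neg at hE
      refine hne ?_
      ext p q
      simp only [SimpleGraph.bot_adj, iff_false]
      exact hE p q
    set c := pt a with hcdef
    have hcA : h.connectedComponentMk c = h.connectedComponentMk a := hpt1 a
    have hVne : Nonempty V := Fintype.card_pos_iff.mp (by omega)
    have hpre : ¬ h.Preconnected := fun hp => hnc ((SimpleGraph.connected_iff _).mpr ⟨hp, hVne⟩)
    rw [SimpleGraph.Preconnected] at hpre
    push_neg at hpre
    obtain ⟨x, y, hxy⟩ := hpre
    have hxyne : h.connectedComponentMk x ≠ h.connectedComponentMk y :=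
      fun e => hxy (SimpleGraph.ConnectedComponent.eq.mp e)
    obtain ⟨w, hw⟩ : ∃ w, h.connectedComponentMk w ≠ h.connectedComponentMk a := by
      by_cases hx : h.connectedComponentMk x = h.connectedComponentMk a
      · exact ⟨y, fun e => hxyne (hx.trans e.symm)⟩
      · exact ⟨x, hx⟩
    obtain ⟨b', hb'A, hb'c⟩ :
        ∃ b', h.connectedComponentMk b' = h.connectedComponentMk a ∧ b' ≠ c := by
      by_cases hac : a = c
      · exact ⟨b, (SimpleGraph.ConnectedComponent.eq.mpr hab.reachable).symm,
          fun e => hab.ne' (e.trans hac.symm)⟩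
      · exact ⟨a, rfl, hac⟩
    have hwc : w ≠ c := fun e => hw (by rw [e]; exact hcA)
    have hkey : ∀ (p q : {u : V | u ≠ c}), (SimpleGraph.induce {u : V | u ≠ c} g).Adj p q →
        h.connectedComponentMk ↑p = h.connectedComponentMk a →
        h.connectedComponentMk ↑q = h.connectedComponentMk a := by
      intro p q hpq hp
      have hadj : g.Adj ↑p ↑q := hpq
      rw [← heq] at hadj
      simp only [etaP, SimpleGraph.fromRel_adj] at hadj
      obtain ⟨-, hr⟩ := hadj
      rcases hr with (hh | ⟨-, hpe, -⟩) | (hh | ⟨-, -, hpe⟩)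
      · exact (SimpleGraph.ConnectedComponent.eq.mpr hh.symm.reachable).trans hp
      · exact absurd (hpe.trans (hpt2 _ _ hp)) p.2
      · exact (SimpleGraph.ConnectedComponent.eq.mpr hh.reachable).trans hp
      · exact absurd (hpe.trans (hpt2 _ _ hp)) p.2
    have hre : (SimpleGraph.induce {u : V | u ≠ c} g).Reachable ⟨b', hb'c⟩ ⟨w, hwc⟩ :=
      (hns c).preconnected _ _
    exact hw (reach_closed
      (fun p : {u : V | u ≠ c} => h.connectedComponentMk ↑p = h.connectedComponentMk a)
      hkey hre hb'A)
end
end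

section
/- Let g be a connected simple graph on vertex set U and B ⊆ U with |B| ≥ 1. Let g_B be the induced subgraph on B and let g₁ be the assembly consisting of g_B together with singleton graphs on all vertices of U − B. Then g₁ divides g in the graph operad (i.e., there exists a connected graph g' on the blocks of the corresponding partition with η(g₁, g') = g) if and only if B is a module of g, i.e., every vertex v ∈ U − B adjacent to some vertex of B is adjacent to every vertex of B. Moreover, when B is a module, the quotient graph g' is unique (it is the contraction of B to a point). -/
open scoped Classical

noncomputable section

/-- The setoid on `V` collapsing the set `B` to a point (the partition of `V`
whose only possibly-non-singleton block is `B`). -/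
def collapse {V : Type} (B : Set V) : Setoid V :=
  ⟨fun u v => u = v ∨ (u ∈ B ∧ v ∈ B), by
    constructor
    · exact fun _ => Or.inl rfl
    · exact fun h => h.imp Eq.symm fun hh => ⟨hh.2, hh.1⟩
    · rintro x y z (rfl | hxy) h
      · exact h
      · rcases h with rfl | hyz
        · exact Or.inr hxy
        · exact Or.inr ⟨hxy.1, hyz.2⟩⟩

/-- The assembly `g₁` determined by `B`: the subgraph of `g` generated by `B`
together with singleton graphs on the remaining vertices. -/
def asmGraph {V : Type} (g : SimpleGraph V) (B : Set V) : SimpleGraph V :=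
  SimpleGraph.fromRel fun u v => g.Adj u v ∧ u ∈ B ∧ v ∈ B

/-- The operad product `η(g₁, g')` of the assembly determined by `B` with an
external graph `g'` on the blocks (the quotient collapsing `B`): all internal
edges of `g₁` plus complete joins between blocks adjacent in `g'`. -/
def etaQ {V : Type} (g₁ : SimpleGraph V) (B : Set V)
    (g' : SimpleGraph (Quotient (collapse B))) : SimpleGraph V :=
  SimpleGraph.fromRel fun u v =>
    g₁.Adj u v ∨ g'.Adj (Quotient.mk (collapse B) u) (Quotient.mk (collapse B) v)

section Helpers

variable {V : Type} {B : Set V}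

lemma collapse_mk_eq {u v : V} :
    (Quotient.mk (collapse B) u = Quotient.mk (collapse B) v) ↔
      (u = v ∨ (u ∈ B ∧ v ∈ B)) := by
  constructor
  · exact fun h => Quotient.exact h
  · exact fun h => Quotient.sound h

lemma asmGraph_adj (g : SimpleGraph V) {u v : V} :
    (asmGraph g B).Adj u v ↔ g.Adj u v ∧ u ∈ B ∧ v ∈ B := by
  unfold asmGraph
  rw [SimpleGraph.fromRel_adj]
  constructor
  · rintro ⟨hne, (⟨h1, h2, h3⟩ | ⟨h1, h2, h3⟩)⟩
    · exact ⟨h1, h2, h3⟩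
    · exact ⟨h1.symm, h3, h2⟩
  · rintro ⟨h1, h2, h3⟩
    exact ⟨h1.ne, Or.inl ⟨h1, h2, h3⟩⟩

lemma etaQ_adj (g₁ : SimpleGraph V) (g' : SimpleGraph (Quotient (collapse B)))
    {u v : V} :
    (etaQ g₁ B g').Adj u v ↔
      u ≠ v ∧ (g₁.Adj u v ∨ g'.Adj (Quotient.mk (collapse B) u) (Quotient.mk (collapse B) v)) := by
  unfold etaQ
  rw [SimpleGraph.fromRel_adj]
  constructor
  · rintro ⟨hne, (h | h)⟩
    · exact ⟨hne, h⟩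
    · exact ⟨hne, h.imp (fun h => h.symm) (fun h => h.symm)⟩
  · rintro ⟨hne, h⟩
    exact ⟨hne, Or.inl h⟩

/-- The contraction of `B` to a point. -/
def quotG (g : SimpleGraph V) (B : Set V) : SimpleGraph (Quotient (collapse B)) :=
  SimpleGraph.fromRel fun x y => ∃ u v : V,
    Quotient.mk (collapse B) u = x ∧ Quotient.mk (collapse B) v = y ∧ g.Adj u v

lemma quotG_adj (g : SimpleGraph V) {x y : Quotient (collapse B)} :
    (quotG g B).Adj x y ↔ x ≠ y ∧ ∃ u v : V,
      Quotient.mk (collapse B) u = x ∧ Quotient.mk (collapse B) v = y ∧ g.Adj u v := by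
  unfold quotG
  rw [SimpleGraph.fromRel_adj]
  constructor
  · rintro ⟨hne, (h | ⟨u, v, h1, h2, h3⟩)⟩
    · exact ⟨hne, h⟩
    · exact ⟨hne, v, u, h2, h1, h3.symm⟩
  · rintro ⟨hne, h⟩
    exact ⟨hne, Or.inl h⟩

lemma quotG_reachable (g : SimpleGraph V) {u v : V} (h : g.Reachable u v) :
    (quotG g B).Reachable (Quotient.mk (collapse B) u) (Quotient.mk (collapse B) v) := by
  obtain ⟨w⟩ := h
  induction w with
  | nil => exact SimpleGraph.Reachable.refl _
  | @cons a b c hab p ih =>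
    refine SimpleGraph.Reachable.trans ?_ ih
    by_cases hq : Quotient.mk (collapse B) a = Quotient.mk (collapse B) b
    · rw [hq]
    · exact SimpleGraph.Adj.reachable
        ((quotG_adj g).2 ⟨hq, a, b, rfl, rfl, hab⟩)

end Helpers
/-- `g₁` (the induced graph on `B` plus singletons) divides the connected graph
`g` in the graph operad iff `B` is a module of `g`, i.e. every vertex outside
`B` adjacent to some vertex of `B` is adjacent to every vertex of `B`;
moreover the quotient graph `g'` (the contraction of `B`) is unique. -/
theorem divides_iff_module {V : Type} [Fintype V] (g : SimpleGraph V)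
    (hg : g.Connected) (B : Set V) (hB : B.Nonempty) :
    ((∃ g' : SimpleGraph (Quotient (collapse B)),
        g'.Connected ∧ etaQ (asmGraph g B) B g' = g)
      ↔ ∀ v : V, v ∉ B → (∃ b ∈ B, g.Adj v b) → ∀ b ∈ B, g.Adj v b) ∧
    (∀ g' g'' : SimpleGraph (Quotient (collapse B)),
        etaQ (asmGraph g B) B g' = g → etaQ (asmGraph g B) B g'' = g → g' = g'') := by
  -- key: under `etaQ a g' = g`, for reps with distinct classes, g'.Adj ⟦u⟧⟦v⟧ ↔ g.Adj u v
  have key : ∀ (g' : SimpleGraph (Quotient (collapse B))),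
      etaQ (asmGraph g B) B g' = g → ∀ u v : V,
      Quotient.mk (collapse B) u ≠ Quotient.mk (collapse B) v →
      (g'.Adj (Quotient.mk (collapse B) u) (Quotient.mk (collapse B) v) ↔ g.Adj u v) := by
    intro g' heq u v hne
    have hnB : ¬ (u ∈ B ∧ v ∈ B) := fun h => hne (Quotient.sound (Or.inr h))
    have huv : u ≠ v := fun h => hne (by rw [h])
    constructor
    · intro h
      rw [← heq, etaQ_adj]
      exact ⟨huv, Or.inr h⟩
    · intro h
      rw [← heq] at h
      rcases (etaQ_adj _ _).1 h with ⟨-, (h' | h')⟩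
      · exact absurd ⟨((asmGraph_adj g).1 h').2.1, ((asmGraph_adj g).1 h').2.2⟩ hnB
      · exact h'
  constructor
  · constructor
    · -- divides → module
      rintro ⟨g', hconn, heq⟩ v hv ⟨b, hb, hadj⟩ b' hb'
      have hne : Quotient.mk (collapse B) v ≠ Quotient.mk (collapse B) b := by
        intro h
        rcases Quotient.exact h with h | h
        · exact hadj.ne h
        · exact hv h.1
      have hadj' : g'.Adj (Quotient.mk (collapse B) v) (Quotient.mk (collapse B) b) :=
        (key g' heq v b hne).2 hadj
      have hbb : Quotient.mk (collapse B) b = Quotient.mk (collapse B) b' :=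
        Quotient.sound (Or.inr ⟨hb, hb'⟩)
      have hne' : Quotient.mk (collapse B) v ≠ Quotient.mk (collapse B) b' := by
        rw [← hbb]; exact hne
      exact (key g' heq v b' hne').1 (hbb ▸ hadj')
    · -- module → divides
      intro hmod
      refine ⟨quotG g B, ?_, ?_⟩
      · -- connectedness
        have : Nonempty (Quotient (collapse B)) := ⟨Quotient.mk (collapse B) hB.some⟩
        refine SimpleGraph.Connected.mk ?_
        intro x y
        induction x using Quotient.ind with | _ u =>
        induction y using Quotient.ind with | _ v =>
        exact quotG_reachable g (hg.preconnected u v)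
      · -- etaQ (asmGraph g B) B (quotG g B) = g
        ext u v
        rw [etaQ_adj]
        constructor
        · rintro ⟨hne, (h | h)⟩
          · exact ((asmGraph_adj g).1 h).1
          · rcases (quotG_adj g).1 h with ⟨hq, u', v', hu', hv', hadj⟩
            have hquv : Quotient.mk (collapse B) u ≠ Quotient.mk (collapse B) v := by
              rw [← hu', ← hv'] at hq ⊢; exact hq
            rcases Quotient.exact hu' with h1 | ⟨hu'B, huB⟩
            · rcases Quotient.exact hv' with h2 | ⟨hv'B, hvB⟩
              · exact h1 ▸ h2 ▸ hadj
              · have huB : u ∉ B := by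
                  intro hu
                  exact hquv (Quotient.sound (Or.inr ⟨hu, hvB⟩))
                exact hmod u huB ⟨v', hv'B, h1 ▸ hadj⟩ v hvB
            · rcases Quotient.exact hv' with h2 | ⟨hv'B, hvB⟩
              · have hvB : v ∉ B := by
                  intro hv
                  exact hquv (Quotient.sound (Or.inr ⟨huB, hv⟩))
                exact (hmod v hvB ⟨u', hu'B, (h2 ▸ hadj).symm⟩ u huB).symm
              · exact absurd (Quotient.sound (Or.inr ⟨huB, hvB⟩)) hquv
        · intro h
          refine ⟨h.ne, ?_⟩
          by_cases hU : u ∈ B ∧ v ∈ B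
          · exact Or.inl ((asmGraph_adj g).2 ⟨h, hU⟩)
          · refine Or.inr ((quotG_adj g).2 ⟨?_, u, v, rfl, rfl, h⟩)
            intro hq
            rcases Quotient.exact hq with h' | h'
            · exact h.ne h'
            · exact hU h'
  · -- uniqueness
    intro g' g'' h' h''
    ext x y
    induction x using Quotient.ind with | _ u =>
    induction y using Quotient.ind with | _ v =>
    by_cases hxy : Quotient.mk (collapse B) u = Quotient.mk (collapse B) v
    · rw [hxy]
      simp
    · rw [key g' h' u v hxy, key g'' h'' u v hxy]
end
end
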